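/- Every r ∈ Q_E can be written as r = τ_{r_m} ∘ τ_{r_{m−1}} ∘ ⋯ ∘ τ_{r_1}(r_0) for some m ≥ 0 and r_0, r_1, …, r_m ∈ Q_UT (when m = 0 this means r = r_0 ∈ Q_UT). -/

import Mathlib

open Filter Set
open scoped Classical

noncomputable section

/-- The Gauss map `G(x) = 1/x - ⌊1/x⌋` for `x ≠ 0`, `G(0) = 0`. -/
def gaussMap (x : ℝ) : ℝ := if x = 0 then 0 else 1 / x - ⌊1 / x⌋

/-- The value of the finite continued fraction `[0; a₁, …, aₙ]`. -/
def cfVal : List ℕ+ → ℝ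
  | [] => 0
  | a :: l => 1 / ((a : ℝ) + cfVal l)

/-- The value of the infinite continued fraction `[0; a₁, a₂, …]`
(the limit of the convergents). -/
def cfValInf (a : ℕ → ℕ+) : ℝ :=
  limUnder atTop (fun n => cfVal (List.ofFn fun i : Fin n => a i))

/-- The purely periodic sequence repeating the string `S`. -/
def perSeq (S : List ℕ+) : ℕ → ℕ+ := fun n => S.getD (n % S.length) 1

/-- `[0; overline{S}]`. -/
def cfPer (S : List ℕ+) : ℝ := cfValInf (perSeq S)

/-- The eventually periodic sequence starting with `T` and then repeating `S`. -/
def preperSeq (T S : List ℕ+) : ℕ → ℕ+ :=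
  fun n => if n < T.length then T.getD n 1 else S.getD ((n - T.length) % S.length) 1

/-- The continued fraction expansion of `r` of even length (when it exists). -/
def evenExp (r : ℝ) : List ℕ+ :=
  if h : ∃ S : List ℕ+, S ≠ [] ∧ Even S.length ∧ cfVal S = r then h.choose else []

/-- The continued fraction expansion of `r` of odd length (when it exists). -/
def oddExp (r : ℝ) : List ℕ+ :=
  if h : ∃ S : List ℕ+, S ≠ [] ∧ Odd S.length ∧ cfVal S = r then h.choose else []

/-- The golden ratio `g = (√5 - 1)/2`. -/
def gGolden : ℝ := (Real.sqrt 5 - 1) / 2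

/-- The quadratic interval `I_r = ([0; overline{S₁}], [0; overline{S₀}])`. -/
def quadInt (r : ℝ) : Set ℝ := Set.Ioo (cfPer (oddExp r)) (cfPer (evenExp r))

/-- The bifurcation (exceptional) set `E = [0,g] \ ⋃_{r ∈ ℚ ∩ (0,1)} I_r`. -/
def ESet : Set ℝ :=
  Set.Icc 0 gGolden \
    ⋃ r ∈ {x : ℝ | x ∈ Set.Ioo (0 : ℝ) 1 ∧ ∃ q : ℚ, (q : ℝ) = x}, quadInt r

/-- `Q_E`: the set of rationals `r ∈ (0,1)` whose quadratic interval `I_r` is maximal,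
i.e. is a connected component of `[0,g] \ E`. -/
def QE : Set ℝ :=
  {r | r ∈ Set.Ioo (0 : ℝ) 1 ∧ (∃ q : ℚ, (q : ℝ) = r) ∧
    ∃ x ∈ quadInt r, connectedComponentIn (Set.Icc 0 gGolden \ ESet) x = quadInt r}

/-- `ω(r) = [0; S₁ overline{S₀}]`. -/
def omegaPt (r : ℝ) : ℝ := cfValInf (preperSeq (oddExp r) (evenExp r))

/-- The tuning window `W_r = [ω(r), α₀)`. -/
def Wwin (r : ℝ) : Set ℝ := Set.Ico (omegaPt r) (cfPer (evenExp r))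

/-- The `(n+1)`-st continued fraction digit of `x`: `a_{n+1} = ⌊1/G^n(x)⌋`. -/
def cfDigit (x : ℝ) (n : ℕ) : ℕ+ := (⌊1 / (gaussMap^[n] x)⌋).toNat.toPNat'

/-- Concatenation of the first `n` blocks of a sequence of strings. -/
def blocksCat (B : ℕ → List ℕ+) : ℕ → List ℕ+
  | 0 => []
  | n + 1 => blocksCat B n ++ B n

/-- The infinite string obtained by concatenating all the blocks `B 0, B 1, …`
(each block assumed nonempty). -/
def flattenBlocks (B : ℕ → List ℕ+) : ℕ → ℕ+ :=
  fun n => (blocksCat B (n + 1)).getD n 1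

/-- Tuning substitution on a single digit: `a ↦ S₁ S₀^{a-1}`. -/
def tuneDigit (r : ℝ) (a : ℕ+) : List ℕ+ :=
  oddExp r ++ (List.replicate ((a : ℕ) - 1) (evenExp r)).flatten

/-- Tuning substitution on finite strings:
`(a₁, …, aₙ) ↦ S₁ S₀^{a₁-1} S₁ S₀^{a₂-1} ⋯ S₁ S₀^{aₙ-1}`. -/
def tuneList (r : ℝ) (A : List ℕ+) : List ℕ+ := (A.map (tuneDigit r)).flatten

/-- The tuning map `τ_r : [0,1] → [0,r]`:  `τ_r(0) = ω(r)`,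
`τ_r([0; a₁, a₂, …]) = [0; S₁ S₀^{a₁-1} S₁ S₀^{a₂-1} …]`, the same substitution
being applied to a finite expansion when the argument is rational. -/
def tune (r : ℝ) (x : ℝ) : ℝ :=
  if x = 0 then omegaPt r
  else if ∃ q : ℚ, (q : ℝ) = x then cfVal (tuneList r (evenExp x))
  else cfValInf (flattenBlocks (fun k => tuneDigit r (cfDigit x k)))

/-- The matching index `⟦A⟧ = a₁ - a₂ + a₃ - ⋯` of a finite string. -/
def mIdx : List ℕ+ → ℤ
  | [] => 0
  | a :: l => (a : ℤ) - mIdx l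

/-- The matching index of a rational number: `⟦r⟧ = ⟦S₀(r)⟧`. -/
def mIdxR (r : ℝ) : ℤ := mIdx (evenExp r)

/-- `B(t) = {x ∈ [0,1] : G^k(x) ≥ t for all k}`. -/
def BSet (t : ℝ) : Set ℝ := {x ∈ Set.Icc (0 : ℝ) 1 | ∀ k : ℕ, gaussMap^[k] x ≥ t}

/-- The regular Cantor set `K(Σ)`: numbers whose continued fraction expansion is an
infinite concatenation of strings from `Σ`. -/
def KSet (SS : Set (List ℕ+)) : Set ℝ :=
  {x | ∃ B : ℕ → List ℕ+, (∀ n, B n ∈ SS) ∧ (∀ n, B n ≠ []) ∧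
    x = cfValInf (flattenBlocks B)}

/-- The set of untuned parameters `UT = [0,g] \ ⋃_{r ∈ Q_E} W_r`. -/
def UTset : Set ℝ := Set.Icc 0 gGolden \ ⋃ r ∈ QE, Wwin r

/-- The set `Q_UT` of untuned rationals. -/
def QUT : Set ℝ := {r ∈ QE | ¬ ∃ s ∈ QE, ∃ p ∈ QE, r = tune s p}

/-- The order `S << T` on finite strings of positive integers. -/
def strLL (S T : List ℕ+) : Prop :=
  ∃ k, k < S.length ∧ k < T.length ∧ (∀ i < k, S.getD i 1 = T.getD i 1) ∧
    (if k % 2 = 1 then S.getD k 1 < T.getD k 1 else T.getD k 1 < S.getD k 1)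

/-- A finite string is dominant if it has even length and is `<<`-smaller than
all of its proper suffixes. -/
def Dominant (S : List ℕ+) : Prop :=
  Even S.length ∧ ∀ A B : List ℕ+, A ≠ [] → B ≠ [] → S = A ++ B → strLL S B

/-- The α-continued fraction transformation `T_α`. -/
def Talpha (α : ℝ) (x : ℝ) : ℝ :=
  if x = 0 then 0 else 1 / |x| - ⌊1 / |x| + 1 - α⌋

end

namespace UF

/-! ### Continuants -/

def denCF : List ℕ+ → ℕ
  | [] => 1
  | [a] => (a : ℕ)
  | a :: b :: l => (a : ℕ) * denCF (b :: l) + denCF l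

def numCF : List ℕ+ → ℕ
  | [] => 0
  | _ :: l => denCF l

lemma denCF_cons (a : ℕ+) (l : List ℕ+) :
    denCF (a :: l) = (a : ℕ) * denCF l + numCF l := by
  cases l <;> simp [denCF, numCF]

lemma denCF_pos (l : List ℕ+) : 0 < denCF l := by
  induction l with
  | nil => simp [denCF]
  | cons a l ih =>
      rw [denCF_cons]
      have ha := a.one_le
      have := Nat.mul_pos (a.pos) ih
      omega

lemma numCF_le (l : List ℕ+) : numCF l ≤ denCF l := by
  cases l with
  | nil => simp [numCF, denCF]
  | cons a l =>
      rw [denCF_cons]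
      have := denCF_pos l
      have ha := a.one_le
      have : 1 * denCF l ≤ (a : ℕ) * denCF l := Nat.mul_le_mul_right _ ha
      simp only [numCF]
      omega

lemma numCF_pos {l : List ℕ+} (h : l ≠ []) : 0 < numCF l := by
  cases l with
  | nil => simp at h
  | cons a l => simpa [numCF] using denCF_pos l

lemma cfVal_eq_div (l : List ℕ+) : cfVal l = (numCF l : ℝ) / (denCF l : ℝ) := by
  induction l with
  | nil => simp [cfVal, numCF, denCF]
  | cons a l ih =>
      have hd : (0:ℝ) < (denCF l : ℝ) := by exact_mod_cast denCF_pos l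
      have ha : (0:ℝ) < ((a:ℕ) : ℝ) := by exact_mod_cast a.pos
      have hnum : (numCF (a :: l) : ℝ) = (denCF l : ℝ) := by simp [numCF]
      have hden : (denCF (a :: l) : ℝ) = (a:ℕ) * denCF l + numCF l := by
        rw [denCF_cons]; push_cast; ring
      have hne : (0:ℝ) < ((a:ℕ):ℝ) * denCF l + numCF l := by
        have : (0:ℝ) ≤ (numCF l : ℝ) := by positivity
        nlinarith
      rw [show cfVal (a :: l) = 1 / ((a : ℝ) + cfVal l) from rfl, ih, hnum, hden]
      have hcast : (a : ℝ) = ((a:ℕ) : ℝ) := rfl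
      rw [hcast]
      field_simp

lemma coprime_numCF_denCF (l : List ℕ+) : Nat.Coprime (numCF l) (denCF l) := by
  induction l with
  | nil => simp [numCF, denCF]
  | cons a l ih =>
      rw [denCF_cons]
      rw [show numCF (a :: l) = denCF l from rfl]
      have : Nat.Coprime (denCF l) (numCF l) := (Nat.coprime_comm).1 ih
      simpa [Nat.Coprime, Nat.gcd_add_mul_right_right] using this

lemma denCF_unique {L M : List ℕ+} (h : cfVal L = cfVal M) : denCF L = denCF M := by
  have h1 := cfVal_eq_div L
  have h2 := cfVal_eq_div M
  rw [h1, h2] at h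
  have hdL : (0:ℝ) < (denCF L : ℝ) := by exact_mod_cast denCF_pos L
  have hdM : (0:ℝ) < (denCF M : ℝ) := by exact_mod_cast denCF_pos M
  have hcross : (numCF L : ℝ) * denCF M = (numCF M : ℝ) * denCF L := by
    field_simp at h
    linarith [h]
  have hnat : numCF L * denCF M = numCF M * denCF L := by exact_mod_cast hcross
  have c1 : denCF L ∣ denCF M := by
    have : denCF L ∣ numCF L * denCF M := ⟨numCF M, by rw [hnat, Nat.mul_comm]⟩
    exact ((coprime_numCF_denCF L).symm.dvd_of_dvd_mul_left this)
  have c2 : denCF M ∣ denCF L := by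
    have : denCF M ∣ numCF M * denCF L := ⟨numCF L, by rw [← hnat, Nat.mul_comm]⟩
    exact ((coprime_numCF_denCF M).symm.dvd_of_dvd_mul_left this)
  exact Nat.dvd_antisymm c1 c2

end UF
namespace UF

/-! ### Basic bounds on `cfVal` -/

lemma cfVal_cons (a : ℕ+) (l : List ℕ+) : cfVal (a :: l) = 1 / ((a : ℝ) + cfVal l) := rfl

lemma pnat_cast_real (a : ℕ+) : (a : ℝ) = ((a : ℕ) : ℝ) := rfl

@[simp] lemma toPNat_val_aux (n : ℕ) (h : 0 < n) : ((Nat.toPNat n h : ℕ+) : ℕ) = n := rfl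

lemma one_le_pnat_real (a : ℕ+) : (1:ℝ) ≤ (a : ℝ) := by
  rw [pnat_cast_real]; exact_mod_cast a.one_le

lemma cfVal_nonneg (l : List ℕ+) : 0 ≤ cfVal l := by
  rw [cfVal_eq_div]; positivity

lemma cfVal_le_one (l : List ℕ+) : cfVal l ≤ 1 := by
  cases l with
  | nil => simp [cfVal]
  | cons a l =>
      rw [cfVal_cons]
      have h1 : (1:ℝ) ≤ (a : ℝ) + cfVal l := by
        have := cfVal_nonneg l; have := one_le_pnat_real a; linarith
      rw [div_le_one (by linarith)]; linarith

lemma cfVal_pos {l : List ℕ+} (h : l ≠ []) : 0 < cfVal l := by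
  cases l with
  | nil => simp at h
  | cons a l =>
      rw [cfVal_cons]
      have := cfVal_nonneg l; have := one_le_pnat_real a
      positivity

lemma cfVal_eq_zero {l : List ℕ+} (h : cfVal l = 0) : l = [] := by
  by_contra hne
  exact absurd h (ne_of_gt (cfVal_pos hne))

lemma cfVal_lt_one {l : List ℕ+} (h : 2 ≤ l.length) : cfVal l < 1 := by
  cases l with
  | nil => simp at h
  | cons a l =>
      have hl : l ≠ [] := by
        intro he; rw [he] at h; simp at h
      rw [cfVal_cons]
      have h1 : (1:ℝ) < (a : ℝ) + cfVal l := by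
        have := cfVal_pos hl; have := one_le_pnat_real a; linarith
      rw [div_lt_one (by linarith)]; exact h1

lemma cfVal_eq_one {l : List ℕ+} (h : cfVal l = 1) : l = [1] := by
  cases l with
  | nil => simp [cfVal] at h
  | cons a l =>
      rw [cfVal_cons] at h
      have hpos : (0:ℝ) < (a : ℝ) + cfVal l := by
        have := cfVal_nonneg l; have := one_le_pnat_real a; linarith
      have hsum : (a : ℝ) + cfVal l = 1 := by
        field_simp at h; linarith
      have h0 : cfVal l = 0 := by
        have := one_le_pnat_real a; have := cfVal_nonneg l; linarith
      have hl : l = [] := cfVal_eq_zero h0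
      subst hl
      have ha : (a : ℝ) = 1 := by rw [h0] at hsum; linarith
      have : (a : ℕ) = 1 := by rw [pnat_cast_real] at ha; exact_mod_cast ha
      have : a = 1 := by
        apply PNat.coe_injective; simpa using this
      rw [this]

/-! ### Uniqueness of expansions of a given parity -/

theorem cf_unique : ∀ L M : List ℕ+, cfVal L = cfVal M →
    L.length % 2 = M.length % 2 → L = M := by
  intro L
  induction L with
  | nil =>
      intro M h _
      have : cfVal M = 0 := by rw [← h]; simp [cfVal]
      exact (cfVal_eq_zero this).symm
  | cons a l ih =>
      intro M h hpar
      cases M with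
      | nil =>
          exfalso
          have := cfVal_pos (l := a :: l) (by simp)
          rw [h] at this; simp [cfVal] at this
      | cons b m =>
          rw [cfVal_cons, cfVal_cons] at h
          have hda : (0:ℝ) < (a : ℝ) + cfVal l := by
            have := cfVal_nonneg l; have := one_le_pnat_real a; linarith
          have hdb : (0:ℝ) < (b : ℝ) + cfVal m := by
            have := cfVal_nonneg m; have := one_le_pnat_real b; linarith
          have heq : (a : ℝ) + cfVal l = (b : ℝ) + cfVal m := by
            field_simp at h; linarith
          rcases lt_trichotomy (a : ℕ) (b : ℕ) with hab | hab | hab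
          · exfalso
            have hab' : ((a:ℕ):ℝ) + 1 ≤ ((b:ℕ):ℝ) := by exact_mod_cast hab
            rw [pnat_cast_real a, pnat_cast_real b] at heq
            have hx1 : cfVal l = 1 := by
              have := cfVal_le_one l; have := cfVal_nonneg m; have := cfVal_le_one m
              linarith
            have hy0 : cfVal m = 0 := by
              have := cfVal_le_one l; have := cfVal_nonneg m
              linarith
            have hl : l = [1] := cfVal_eq_one hx1
            have hm : m = [] := cfVal_eq_zero hy0
            rw [hl, hm] at hpar
            simp at hpar
          · have hab' : a = b := PNat.coe_injective hab
            subst hab'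
            have hx : cfVal l = cfVal m := by
              rw [pnat_cast_real] at heq; linarith
            have hp : l.length % 2 = m.length % 2 := by
              simp only [List.length_cons] at hpar; omega
            rw [ih m hx hp]
          · exfalso
            have hab' : ((b:ℕ):ℝ) + 1 ≤ ((a:ℕ):ℝ) := by exact_mod_cast hab
            rw [pnat_cast_real a, pnat_cast_real b] at heq
            have hx1 : cfVal m = 1 := by
              have := cfVal_le_one m; have := cfVal_nonneg l; have := cfVal_le_one l
              linarith
            have hy0 : cfVal l = 0 := by
              have := cfVal_le_one m; have := cfVal_nonneg l
              linarith
            have hm : m = [1] := cfVal_eq_one hx1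
            have hl : l = [] := cfVal_eq_zero hy0
            rw [hl, hm] at hpar
            simp at hpar

/-! ### Suffix congruence and twins -/

lemma cfVal_suffix (L : List ℕ+) {T1 T2 : List ℕ+} (h : cfVal T1 = cfVal T2) :
    cfVal (L ++ T1) = cfVal (L ++ T2) := by
  induction L with
  | nil => simpa using h
  | cons a l ih => rw [List.cons_append, List.cons_append, cfVal_cons, cfVal_cons, ih]

lemma cfVal_twin (M : List ℕ+) (a c : ℕ+) (hc : (c : ℕ) + 1 = (a : ℕ)) :
    cfVal (M ++ [a]) = cfVal (M ++ [c, 1]) := by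
  apply cfVal_suffix
  rw [cfVal_cons, cfVal_cons, cfVal_cons]
  have h1 : cfVal ([] : List ℕ+) = 0 := rfl
  simp only [h1]
  have hca : (c : ℝ) + 1 = (a : ℝ) := by
    rw [pnat_cast_real, pnat_cast_real]; exact_mod_cast hc
  have hone : ((1 : ℕ+) : ℝ) = 1 := by norm_num [pnat_cast_real]
  rw [hone]
  rw [show (1:ℝ) + 0 = 1 by ring]
  norm_num
  rw [← hca]

end UF
namespace UF

/-! ### Existence of expansions -/

lemma exists_cf_nat : ∀ n : ℕ, ∀ d : ℕ, 0 < n → n < d →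
    ∃ L : List ℕ+, ∃ h : L ≠ [], cfVal L = (n : ℝ) / d ∧ 1 < (L.getLast h : ℕ) := by
  intro n
  induction n using Nat.strong_induction_on with
  | _ n ih =>
    intro d hn hnd
    have hd0 : 0 < d := lt_trans hn hnd
    rcases Nat.eq_zero_or_pos (d % n) with hr | hr
    · -- n ∣ d, d = n * a with a ≥ 2
      have hdvd : n ∣ d := Nat.dvd_of_mod_eq_zero hr
      set a := d / n with ha
      have hda : n * a = d := Nat.mul_div_cancel' hdvd
      have ha2 : 2 ≤ a := by
        rcases Nat.lt_or_ge a 2 with h2 | h2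
        · interval_cases a <;> omega
        · exact h2
      refine ⟨[Nat.toPNat a (by omega)], by simp, ?_, by simp; omega⟩
      have : cfVal [Nat.toPNat a (by omega)] = 1 / (a : ℝ) := by
        rw [show ([Nat.toPNat a (by omega)] : List ℕ+) = Nat.toPNat a (by omega) :: [] from rfl,
          cfVal_cons]
        simp [cfVal, pnat_cast_real]
      rw [this]
      have hdr : (d : ℝ) = (n : ℝ) * a := by exact_mod_cast hda.symm
      rw [hdr]
      have hn0 : (n:ℝ) ≠ 0 := by positivity
      have ha0 : (a:ℝ) ≠ 0 := by positivity
      field_simp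
    · -- recursive step
      have hrn : d % n < n := Nat.mod_lt _ hn
      obtain ⟨L', h', hval, hlast⟩ := ih (d % n) hrn n hr hrn
      set a := d / n with ha
      have ha1 : 1 ≤ a := (Nat.one_le_div_iff hn).mpr (le_of_lt hnd)
      have hapos : 0 < a := by omega
      refine ⟨Nat.toPNat a hapos :: L', by simp, ?_, ?_⟩
      · rw [show cfVal (Nat.toPNat a hapos :: L') = 1 / ((a:ℝ) + cfVal L') from rfl, hval]
        have hsum : (n:ℝ) * a + (d % n : ℕ) = d := by exact_mod_cast Nat.div_add_mod d n
        have hn0 : (0:ℝ) < (n:ℝ) := by exact_mod_cast hn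
        have hd0' : (0:ℝ) < (d:ℝ) := by exact_mod_cast hd0
        have hstep : (a:ℝ) + (d % n : ℕ) / n = (d:ℝ) / n := by
          field_simp
          rw [← hsum]; ring
        rw [hstep, one_div_div]
      · rw [List.getLast_cons h']; exact hlast

/-! ### The `Good` predicate -/

def Good (x : ℝ) : Prop := 0 < x ∧ x < 1 ∧ ∃ q : ℚ, (q : ℝ) = x

lemma exists_cf_good {x : ℝ} (hx : Good x) :
    ∃ L : List ℕ+, ∃ h : L ≠ [], cfVal L = x ∧ 1 < (L.getLast h : ℕ) := by
  obtain ⟨hx0, hx1, q, hq⟩ := hx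
  have hq0 : 0 < q := by rw [← Rat.cast_pos (K := ℝ)]; rw [hq]; exact hx0
  have hq1 : q < 1 := by
    have : (q:ℝ) < ((1:ℚ):ℝ) := by rw [hq]; simpa using hx1
    exact_mod_cast this
  have hnum : 0 < q.num := Rat.num_pos.mpr hq0
  have hlt : q.num < (q.den : ℤ) := by
    have hden : (0:ℝ) < (q.den : ℝ) := by exact_mod_cast q.den_pos
    have h1 : (q.num : ℝ) / q.den < 1 := by rw [← Rat.cast_def, hq]; exact hx1
    have h2 : (q.num : ℝ) < q.den := by
      rw [div_lt_one hden] at h1; exact h1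
    exact_mod_cast h2
  obtain ⟨L, h, hval, hlast⟩ := exists_cf_nat q.num.toNat q.den
    (by omega) (by omega)
  refine ⟨L, h, ?_, hlast⟩
  rw [hval, ← hq, Rat.cast_def]
  congr 1
  exact_mod_cast Int.toNat_of_nonneg hnum.le

end UF
namespace UF

/-! ### Identification of `evenExp` and `oddExp` -/

lemma exists_both {x : ℝ} (hx : Good x) :
    ∃ M : List ℕ+, ∃ a c : ℕ+, (c:ℕ) + 1 = (a:ℕ) ∧
      cfVal (M ++ [a]) = x ∧ cfVal (M ++ [c, 1]) = x := by
  obtain ⟨L, h, hval, hlast⟩ := exists_cf_good hx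
  set a := L.getLast h with hadef
  refine ⟨L.dropLast, a, Nat.toPNat ((a:ℕ) - 1) (by omega), by simp [Nat.toPNat]; omega, ?_, ?_⟩
  · rw [List.dropLast_append_getLast h]; exact hval
  · rw [← cfVal_twin _ a _ (by simp; omega), List.dropLast_append_getLast h]
    exact hval

lemma exists_even {x : ℝ} (hx : Good x) :
    ∃ S : List ℕ+, S ≠ [] ∧ Even S.length ∧ cfVal S = x := by
  obtain ⟨M, a, c, hc, h1, h2⟩ := exists_both hx
  rcases Nat.even_or_odd (M ++ [a]).length with he | ho
  · exact ⟨M ++ [a], by simp, he, h1⟩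
  · refine ⟨M ++ [c, 1], by simp, ?_, h2⟩
    simp only [List.length_append, List.length_cons, List.length_singleton] at *
    rw [Nat.even_iff]
    rw [Nat.odd_iff] at ho
    omega

lemma exists_odd {x : ℝ} (hx : Good x) :
    ∃ S : List ℕ+, S ≠ [] ∧ Odd S.length ∧ cfVal S = x := by
  obtain ⟨M, a, c, hc, h1, h2⟩ := exists_both hx
  rcases Nat.even_or_odd (M ++ [a]).length with he | ho
  · refine ⟨M ++ [c, 1], by simp, ?_, h2⟩
    simp only [List.length_append, List.length_cons, List.length_singleton] at *
    rw [Nat.odd_iff]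
    rw [Nat.even_iff] at he
    omega
  · exact ⟨M ++ [a], by simp, ho, h1⟩

lemma evenExp_spec {x : ℝ} (hx : Good x) :
    evenExp x ≠ [] ∧ Even (evenExp x).length ∧ cfVal (evenExp x) = x := by
  rw [evenExp, dif_pos (exists_even hx)]
  exact (exists_even hx).choose_spec

lemma oddExp_spec {x : ℝ} (hx : Good x) :
    oddExp x ≠ [] ∧ Odd (oddExp x).length ∧ cfVal (oddExp x) = x := by
  rw [oddExp, dif_pos (exists_odd hx)]
  exact (exists_odd hx).choose_spec

lemma evenExp_eq {x : ℝ} (hx : Good x) {S : List ℕ+}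
    (h2 : Even S.length) (h3 : cfVal S = x) : evenExp x = S := by
  obtain ⟨-, he, hv⟩ := evenExp_spec hx
  exact cf_unique _ _ (by rw [hv, h3]) (by rw [Nat.even_iff] at he h2; omega)

lemma oddExp_eq {x : ℝ} (hx : Good x) {S : List ℕ+}
    (h2 : Odd S.length) (h3 : cfVal S = x) : oddExp x = S := by
  obtain ⟨-, he, hv⟩ := oddExp_spec hx
  exact cf_unique _ _ (by rw [hv, h3]) (by rw [Nat.odd_iff] at he h2; omega)

lemma exp_twin {x : ℝ} (hx : Good x) :
    ∃ M : List ℕ+, ∃ a c : ℕ+, (c:ℕ) + 1 = (a:ℕ) ∧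
      ((evenExp x = M ++ [a] ∧ oddExp x = M ++ [c, 1]) ∨
       (oddExp x = M ++ [a] ∧ evenExp x = M ++ [c, 1])) := by
  obtain ⟨M, a, c, hc, h1, h2⟩ := exists_both hx
  refine ⟨M, a, c, hc, ?_⟩
  rcases Nat.even_or_odd (M ++ [a]).length with he | ho
  · left
    have hlen2 : Odd (M ++ [c, 1]).length := by
      simp only [List.length_append, List.length_cons, List.length_singleton] at *
      rw [Nat.odd_iff]; rw [Nat.even_iff] at he; omega
    exact ⟨evenExp_eq hx he h1, oddExp_eq hx hlen2 h2⟩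
  · right
    have hlen2 : Even (M ++ [c, 1]).length := by
      simp only [List.length_append, List.length_cons, List.length_singleton] at *
      rw [Nat.even_iff]; rw [Nat.odd_iff] at ho; omega
    exact ⟨oddExp_eq hx ho h1, evenExp_eq hx hlen2 h2⟩

lemma denCF_odd_eq_even {x : ℝ} (hx : Good x) :
    denCF (oddExp x) = denCF (evenExp x) := by
  exact denCF_unique (by rw [(oddExp_spec hx).2.2, (evenExp_spec hx).2.2])

lemma evenExp_len2 {x : ℝ} (hx : Good x) : 2 ≤ (evenExp x).length := by
  obtain ⟨hne, he, -⟩ := evenExp_spec hx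
  rcases he with ⟨k, hk⟩
  have : (evenExp x).length ≠ 0 := by simpa using hne
  omega

end UF
namespace UF

/-! ### Sums and products of digit lists -/

def sumL (L : List ℕ+) : ℕ := (L.map (fun a => (a : ℕ))).sum

def prodD (L : List ℕ+) : ℕ := (L.map (fun a => (a : ℕ) + 1)).prod

lemma sumL_nil : sumL [] = 0 := rfl
lemma sumL_cons (a : ℕ+) (l : List ℕ+) : sumL (a :: l) = (a:ℕ) + sumL l := by
  simp [sumL]
lemma sumL_append (A B : List ℕ+) : sumL (A ++ B) = sumL A + sumL B := by
  simp [sumL]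

lemma len_le_sumL (L : List ℕ+) : L.length ≤ sumL L := by
  induction L with
  | nil => simp [sumL]
  | cons a l ih =>
      rw [sumL_cons]
      have ha : 0 < (a:ℕ) := a.pos
      simp only [List.length_cons]
      omega

lemma sumL_flatten_replicate (k : ℕ) (E : List ℕ+) :
    sumL (List.replicate k E).flatten = k * sumL E := by
  induction k with
  | zero => simp [sumL]
  | succ k ih =>
      rw [List.replicate_succ, List.flatten_cons, sumL_append, ih]
      ring

lemma denCF_ge_sumL {L : List ℕ+} (h : L ≠ []) : sumL L ≤ denCF L := by
  induction L with
  | nil => simp at h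
  | cons a l ih =>
      rw [denCF_cons, sumL_cons]
      rcases eq_or_ne l [] with rfl | hl
      · simp [sumL, denCF, numCF]
      · have h1 := ih hl
        have h2 := numCF_pos hl
        have h3 := denCF_pos l
        have ha : 1 ≤ (a:ℕ) := a.pos
        obtain ⟨k, hk⟩ := Nat.exists_eq_add_of_le ha
        rw [hk]
        have h4 : k * 1 ≤ k * denCF l := Nat.mul_le_mul_left _ h3
        nlinarith

lemma denCF_append_ge : ∀ A B : List ℕ+,
    denCF A * denCF B ≤ denCF (A ++ B) ∧ numCF A * denCF B ≤ numCF (A ++ B) := by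
  intro A
  induction A with
  | nil => intro B; simp [denCF, numCF]
  | cons a l ih =>
      intro B
      constructor
      · rw [List.cons_append, denCF_cons, denCF_cons]
        have h1 := (ih B).1
        have h2 := (ih B).2
        calc ((a:ℕ) * denCF l + numCF l) * denCF B
            = (a:ℕ) * (denCF l * denCF B) + numCF l * denCF B := by ring
          _ ≤ (a:ℕ) * denCF (l ++ B) + numCF (l ++ B) := by
              have := Nat.mul_le_mul_left (a:ℕ) h1
              omega
      · rw [List.cons_append]
        simp only [numCF]
        exact (ih B).1

lemma denCF_mul_le (A B : List ℕ+) : denCF A * denCF B ≤ denCF (A ++ B) :=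
  (denCF_append_ge A B).1

lemma prodD_pos (L : List ℕ+) : 0 < prodD L := by
  induction L with
  | nil => simp [prodD]
  | cons a l ih =>
      have : prodD (a :: l) = ((a:ℕ) + 1) * prodD l := by simp [prodD]
      rw [this]
      exact Nat.mul_pos (by omega) ih

lemma denCF_lt_prodD {L : List ℕ+} (h : L ≠ []) : denCF L < prodD L := by
  induction L with
  | nil => simp at h
  | cons a l ih =>
      rw [denCF_cons]
      simp only [prodD, List.map_cons, List.prod_cons]
      rcases eq_or_ne l [] with rfl | hl
      · simp [denCF, numCF, prodD]
      · have h1 := ih hl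
        have h2 := numCF_le l
        have h3 := denCF_pos l
        have h4 : (a:ℕ) * denCF l + numCF l ≤ ((a:ℕ) + 1) * denCF l := by nlinarith
        have h5 : ((a:ℕ) + 1) * denCF l < ((a:ℕ) + 1) * prodD l := by nlinarith
        exact lt_of_le_of_lt h4 h5

/-! ### tuneList basics -/

lemma tuneList_nil (u : ℝ) : tuneList u [] = [] := rfl

lemma tuneList_cons (u : ℝ) (a : ℕ+) (A : List ℕ+) :
    tuneList u (a :: A) = tuneDigit u a ++ tuneList u A := by
  simp [tuneList]

lemma tuneList_append (u : ℝ) (A B : List ℕ+) :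
    tuneList u (A ++ B) = tuneList u A ++ tuneList u B := by
  simp [tuneList]

end UF
namespace UF

/-! ### Tuning: structure lemmas under `Good` -/

lemma sumL_evenExp_ge {u : ℝ} (hu : Good u) : 2 ≤ sumL (evenExp u) :=
  le_trans (evenExp_len2 hu) (len_le_sumL _)

lemma sumL_oddExp_ge {u : ℝ} (hu : Good u) : 2 ≤ sumL (oddExp u) := by
  obtain ⟨hne, ho, hv⟩ := oddExp_spec hu
  rcases hO : oddExp u with _ | ⟨a, l⟩
  · exact absurd hO hne
  rcases eq_or_ne l [] with rfl | hl
  · rw [hO] at hv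
    rw [cfVal_cons] at hv
    have h0 : cfVal ([] : List ℕ+) = 0 := rfl
    rw [h0, add_zero] at hv
    have hu1 := hu.2.1
    have ha0 : (0:ℝ) < (a:ℝ) := by
      have := one_le_pnat_real a; linarith
    have : (1:ℝ) < (a:ℝ) := by
      rw [← hv] at hu1
      rw [div_lt_one ha0] at hu1
      exact hu1
    have ha2 : 2 ≤ (a:ℕ) := by
      rw [pnat_cast_real] at this; exact_mod_cast this
    rw [sumL_cons, sumL_nil]
    omega
  · have : 2 ≤ (a :: l).length := by
      simp only [List.length_cons]
      have := List.length_pos_iff.mpr hl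
      omega
    calc 2 ≤ (a :: l).length := this
      _ ≤ sumL (a :: l) := len_le_sumL _

lemma tuneDigit_def (u : ℝ) (a : ℕ+) :
    tuneDigit u a = oddExp u ++ (List.replicate ((a:ℕ) - 1) (evenExp u)).flatten := rfl

lemma flatten_replicate_len (k : ℕ) (E : List ℕ+) :
    (List.replicate k E).flatten.length = k * E.length := by
  induction k with
  | zero => simp
  | succ k ih => rw [List.replicate_succ, List.flatten_cons, List.length_append, ih]; ring

lemma sumL_tuneDigit (u : ℝ) (a : ℕ+) :
    sumL (tuneDigit u a) = sumL (oddExp u) + ((a:ℕ) - 1) * sumL (evenExp u) := by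
  rw [tuneDigit_def, sumL_append, sumL_flatten_replicate]

lemma tuneDigit_ne {u : ℝ} (hu : Good u) (a : ℕ+) : tuneDigit u a ≠ [] := by
  rw [tuneDigit_def]
  simp [(oddExp_spec hu).1]

lemma denCF_tuneDigit_ge {u : ℝ} (hu : Good u) (a : ℕ+) :
    (a:ℕ) + 1 ≤ denCF (tuneDigit u a) := by
  have h1 := denCF_ge_sumL (tuneDigit_ne hu a)
  rw [sumL_tuneDigit] at h1
  have h2 := sumL_evenExp_ge hu
  have h3 := sumL_oddExp_ge hu
  have ha := a.pos
  have h4 : ((a:ℕ) - 1) * 2 ≤ ((a:ℕ) - 1) * sumL (evenExp u) :=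
    Nat.mul_le_mul_left _ h2
  omega

lemma denCF_oddExp_le_tuneDigit {u : ℝ} (hu : Good u) (a : ℕ+) :
    denCF (oddExp u) ≤ denCF (tuneDigit u a) := by
  rw [tuneDigit_def]
  calc denCF (oddExp u) = denCF (oddExp u) * 1 := by ring
    _ ≤ denCF (oddExp u) * denCF ((List.replicate ((a:ℕ) - 1) (evenExp u)).flatten) :=
        Nat.mul_le_mul_left _ (denCF_pos _)
    _ ≤ _ := denCF_mul_le _ _

lemma prodD_le_tuneList {u : ℝ} (hu : Good u) : ∀ A : List ℕ+,
    prodD A ≤ denCF (tuneList u A) := by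
  intro A
  induction A with
  | nil => simp [prodD, tuneList, denCF]
  | cons a A ih =>
      rw [tuneList_cons]
      have h1 : prodD (a :: A) = ((a:ℕ) + 1) * prodD A := by simp [prodD]
      rw [h1]
      calc ((a:ℕ) + 1) * prodD A ≤ denCF (tuneDigit u a) * denCF (tuneList u A) :=
            Nat.mul_le_mul (denCF_tuneDigit_ge hu a) ih
        _ ≤ _ := denCF_mul_le _ _

lemma tuneDigit_len_odd {u : ℝ} (hu : Good u) (a : ℕ+) :
    Odd (tuneDigit u a).length := by
  rw [tuneDigit_def, List.length_append, flatten_replicate_len]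
  have ho := (oddExp_spec hu).2.1
  have he := (evenExp_spec hu).2.1
  rw [Nat.odd_iff] at ho ⊢
  rw [Nat.even_iff] at he
  have hmul := Nat.mul_mod ((a:ℕ) - 1) (evenExp u).length 2
  rw [he, Nat.mul_zero, Nat.zero_mod] at hmul
  omega

lemma tuneList_parity {u : ℝ} (hu : Good u) (A : List ℕ+) :
    (tuneList u A).length % 2 = A.length % 2 := by
  induction A with
  | nil => rfl
  | cons a A ih =>
      rw [tuneList_cons, List.length_append, List.length_cons]
      have := tuneDigit_len_odd hu a
      rw [Nat.odd_iff] at this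
      omega

lemma tuneList_len_ge {u : ℝ} (hu : Good u) (A : List ℕ+) :
    A.length ≤ (tuneList u A).length := by
  induction A with
  | nil => simp [tuneList]
  | cons a A ih =>
      rw [tuneList_cons, List.length_append, List.length_cons]
      have := List.length_pos_iff.mpr (tuneDigit_ne hu a)
      omega

lemma cfVal_rat (L : List ℕ+) : ∃ q : ℚ, (q : ℝ) = cfVal L := by
  refine ⟨(numCF L : ℚ) / (denCF L : ℚ), ?_⟩
  rw [cfVal_eq_div]
  push_cast
  rfl

lemma tune_eq {x : ℝ} (hx : Good x) (u : ℝ) :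
    tune u x = cfVal (tuneList u (evenExp x)) := by
  rw [tune, if_neg hx.1.ne', if_pos hx.2.2]

lemma Good_tune {u x : ℝ} (hu : Good u) (hx : Good x) : Good (tune u x) := by
  rw [tune_eq hx u]
  have hlen : 2 ≤ (tuneList u (evenExp x)).length :=
    le_trans (evenExp_len2 hx) (tuneList_len_ge hu _)
  have hne : tuneList u (evenExp x) ≠ [] := by
    intro h; rw [h] at hlen; simp at hlen
  exact ⟨cfVal_pos hne, cfVal_lt_one hlen, cfVal_rat _⟩

lemma tuneList_twin_key {u : ℝ} (hu : Good u) (M : List ℕ+) (a c : ℕ+)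
    (hc : (c:ℕ) + 1 = (a:ℕ)) :
    cfVal (tuneList u (M ++ [a])) = cfVal (tuneList u (M ++ [c, 1])) := by
  have hE := (evenExp_spec hu).2.2
  have hO := (oddExp_spec hu).2.2
  have hvalEO : cfVal (evenExp u) = cfVal (oddExp u) := by rw [hE, hO]
  set E := evenExp u
  set O := oddExp u
  set Z := tuneList u M ++ (O ++ (List.replicate ((c:ℕ) - 1) E).flatten) with hZ
  have h1 : tuneList u (M ++ [a]) = Z ++ E := by
    rw [tuneList_append]
    have : tuneList u [a] = tuneDigit u a ++ [] := by simp [tuneList]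
    rw [this, List.append_nil, tuneDigit_def]
    have hk : (a:ℕ) - 1 = ((c:ℕ) - 1) + 1 := by
      have := c.pos; omega
    rw [hk, List.replicate_succ', List.flatten_append]
    simp [hZ, List.append_assoc]
    rfl
  have h2 : tuneList u (M ++ [c, 1]) = Z ++ O := by
    rw [tuneList_append]
    have : tuneList u [c, 1] = tuneDigit u c ++ (tuneDigit u 1 ++ []) := by
      simp [tuneList]
    rw [this, List.append_nil, tuneDigit_def, tuneDigit_def]
    have h11 : ((1:ℕ+):ℕ) - 1 = 0 := rfl
    rw [h11]
    simp [hZ, List.append_assoc]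
    rfl
  rw [h1, h2]
  exact cfVal_suffix Z hvalEO

lemma tuneList_odd_even {u x : ℝ} (hu : Good u) (hx : Good x) :
    cfVal (tuneList u (oddExp x)) = cfVal (tuneList u (evenExp x)) := by
  obtain ⟨M, a, c, hc, hcase⟩ := exp_twin hx
  rcases hcase with ⟨hE, hO⟩ | ⟨hO, hE⟩
  · rw [hE, hO]; exact (tuneList_twin_key hu M a c hc).symm
  · rw [hE, hO]; exact tuneList_twin_key hu M a c hc

lemma evenExp_tune {u x : ℝ} (hu : Good u) (hx : Good x) :
    evenExp (tune u x) = tuneList u (evenExp x) := by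
  apply evenExp_eq (Good_tune hu hx)
  · rw [Nat.even_iff, tuneList_parity hu]
    have := (evenExp_spec hx).2.1
    rw [Nat.even_iff] at this
    exact this
  · exact (tune_eq hx u).symm

lemma oddExp_tune {u x : ℝ} (hu : Good u) (hx : Good x) :
    oddExp (tune u x) = tuneList u (oddExp x) := by
  apply oddExp_eq (Good_tune hu hx)
  · rw [Nat.odd_iff, tuneList_parity hu]
    have := (oddExp_spec hx).2.1
    rw [Nat.odd_iff] at this
    exact this
  · rw [tuneList_odd_even hu hx, ← tune_eq hx u]

lemma flatten_replicate_tuneList (u : ℝ) (k : ℕ) (E : List ℕ+) :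
    (List.replicate k (tuneList u E)).flatten = tuneList u (List.replicate k E).flatten := by
  induction k with
  | zero => simp [tuneList]
  | succ k ih =>
      rw [List.replicate_succ, List.replicate_succ, List.flatten_cons, List.flatten_cons,
        tuneList_append, ih]

lemma tuneDigit_comp {u v : ℝ} (hu : Good u) (hv : Good v) (a : ℕ+) :
    tuneDigit (tune u v) a = tuneList u (tuneDigit v a) := by
  rw [tuneDigit_def, tuneDigit_def, oddExp_tune hu hv, evenExp_tune hu hv,
    flatten_replicate_tuneList, ← tuneList_append]

lemma tuneList_comp {u v : ℝ} (hu : Good u) (hv : Good v) (A : List ℕ+) :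
    tuneList (tune u v) A = tuneList u (tuneList v A) := by
  induction A with
  | nil => rfl
  | cons a A ih =>
      rw [tuneList_cons, tuneList_cons, ih, tuneDigit_comp hu hv, ← tuneList_append]

lemma tune_comp {u v x : ℝ} (hu : Good u) (hv : Good v) (hx : Good x) :
    tune (tune u v) x = tune u (tune v x) := by
  rw [tune_eq hx (tune u v), tuneList_comp hu hv, tune_eq (Good_tune hv hx) u,
    evenExp_tune hv hx]

lemma Good_foldr {b : ℝ} {L : List ℝ} (hL : ∀ a ∈ L, Good a) (hb : Good b) :
    Good (List.foldr tune b L) := by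
  induction L with
  | nil => exact hb
  | cons u L ih =>
      rw [List.foldr_cons]
      exact Good_tune (hL u (by simp)) (ih (fun a ha => hL a (by simp [ha])))

lemma foldr_tune_apply {p b : ℝ} (L : List ℝ) (hL : ∀ a ∈ L, Good a) (hb : Good b)
    (hp : Good p) :
    tune (List.foldr tune b L) p = List.foldr tune (tune b p) L := by
  induction L with
  | nil => rfl
  | cons u L ih =>
      rw [List.foldr_cons, List.foldr_cons]
      rw [tune_comp (hL u (by simp)) (Good_foldr (fun a ha => hL a (by simp [ha])) hb) hp]
      rw [ih (fun a ha => hL a (by simp [ha]))]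

end UF
namespace UF

lemma Good_of_QE {r : ℝ} (hr : r ∈ QE) : Good r := ⟨hr.1.1, hr.1.2, hr.2.1⟩

lemma measure_p {s p : ℝ} (hs : Good s) (hp : Good p) :
    denCF (evenExp p) < denCF (tuneList s (evenExp p)) :=
  lt_of_lt_of_le (denCF_lt_prodD (evenExp_spec hp).1) (prodD_le_tuneList hs _)

lemma measure_s {s p : ℝ} (hs : Good s) (hp : Good p) :
    denCF (evenExp s) < denCF (tuneList s (evenExp p)) := by
  have hlen := evenExp_len2 hp
  rcases hE : evenExp p with _ | ⟨a, t⟩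
  · rw [hE] at hlen; simp at hlen
  have ht : t ≠ [] := by
    intro h
    rw [hE, h] at hlen
    simp at hlen
  have h2 : 2 ≤ prodD t := by
    rcases t with _ | ⟨b, t'⟩
    · exact absurd rfl ht
    · have : prodD (b :: t') = ((b:ℕ) + 1) * prodD t' := by simp [prodD]
      rw [this]
      have hb := b.pos
      have hpr := prodD_pos t'
      calc 2 = 2 * 1 := by norm_num
        _ ≤ ((b:ℕ) + 1) * prodD t' := Nat.mul_le_mul (by omega) hpr
  rw [tuneList_cons]
  have hchain : denCF (oddExp s) * 2 ≤ denCF (tuneDigit s a ++ tuneList s t) :=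
    calc denCF (oddExp s) * 2 ≤ denCF (tuneDigit s a) * denCF (tuneList s t) :=
          Nat.mul_le_mul (denCF_oddExp_le_tuneDigit hs a)
            (le_trans h2 (prodD_le_tuneList hs t))
      _ ≤ _ := denCF_mul_le _ _
  have hOE := denCF_odd_eq_even hs
  have hpos := denCF_pos (oddExp s)
  omega

end UF

theorem UF.untuned_factorization' (r : ℝ) (hr : r ∈ QE) :
    ∃ r₀ ∈ QUT, ∃ L : List ℝ, (∀ s ∈ L, s ∈ QUT) ∧ r = L.foldr tune r₀ := by
  suffices H : ∀ n : ℕ, ∀ r : ℝ, r ∈ QE → UF.denCF (evenExp r) < n →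
      ∃ r₀ ∈ QUT, ∃ L : List ℝ, (∀ s ∈ L, s ∈ QUT) ∧ r = L.foldr tune r₀ by
    exact H (UF.denCF (evenExp r) + 1) r hr (Nat.lt_succ_self _)
  intro n
  induction n using Nat.strong_induction_on with
  | _ n ih =>
    intro r hrQE hlt
    by_cases hU : r ∈ QUT
    · exact ⟨r, hU, [], by simp, rfl⟩
    have hEx : ∃ s ∈ QE, ∃ p ∈ QE, r = tune s p := by
      by_contra hno
      exact hU ⟨hrQE, hno⟩
    obtain ⟨s, hsQE, p, hpQE, hrsp⟩ := hEx
    have hgs : UF.Good s := UF.Good_of_QE hsQE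
    have hgp : UF.Good p := UF.Good_of_QE hpQE
    have hgr : UF.Good r := UF.Good_of_QE hrQE
    have hden : UF.denCF (evenExp r) = UF.denCF (tuneList s (evenExp p)) := by
      apply UF.denCF_unique
      rw [(UF.evenExp_spec hgr).2.2, ← UF.tune_eq hgp s, hrsp]
    have hmp : UF.denCF (evenExp p) < UF.denCF (evenExp r) := by
      rw [hden]; exact UF.measure_p hgs hgp
    have hms : UF.denCF (evenExp s) < UF.denCF (evenExp r) := by
      rw [hden]; exact UF.measure_s hgs hgp
    obtain ⟨p₀, hp₀, Lp, hLp, hpe⟩ := ih (UF.denCF (evenExp r)) (by omega) p hpQE hmp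
    obtain ⟨s₀, hs₀, Ls, hLs, hse⟩ := ih (UF.denCF (evenExp r)) (by omega) s hsQE hms
    refine ⟨p₀, hp₀, Ls ++ s₀ :: Lp, ?_, ?_⟩
    · intro t ht
      rcases List.mem_append.mp ht with h | h
      · exact hLs t h
      · rcases List.mem_cons.mp h with rfl | h
        · exact hs₀
        · exact hLp t h
    · have hGLs : ∀ a ∈ Ls, UF.Good a := fun a ha => UF.Good_of_QE (hLs a ha).1
      have hGs₀ : UF.Good s₀ := UF.Good_of_QE hs₀.1
      rw [List.foldr_append]
      have h1 : List.foldr tune p₀ (s₀ :: Lp) = tune s₀ p := by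
        rw [List.foldr_cons, ← hpe]
      rw [h1, ← UF.foldr_tune_apply Ls hGLs hGs₀ hgp, ← hse]
      exact hrsp

/-- Every `r ∈ Q_E` factors as `r = τ_{r_m} ∘ ⋯ ∘ τ_{r_1}(r_0)` with all
`r_i ∈ Q_UT` (when the list is empty this means `r = r_0 ∈ Q_UT`). -/
theorem untuned_factorization (r : ℝ) (hr : r ∈ QE) :
    ∃ r₀ ∈ QUT, ∃ L : List ℝ, (∀ s ∈ L, s ∈ QUT) ∧ r = L.foldr tune r₀ := by
  exact UF.untuned_factorization' r hr
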